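/- If L ∈ ℝ^{n×n} is a (c_L,γ)-SED block matrix, then for every integer k ≥ 1 the power Lᵏ is (N^{k−1}·c_Lᵏ, γ)-SED. -/

import Mathlib

open Matrix

/-- Operator (induced l2) norm of a real matrix. -/
noncomputable def opNorm {α β : Type*} [Fintype α] [Fintype β] [DecidableEq β]
    (X : Matrix α β ℝ) : ℝ :=
  ‖LinearMap.toContinuousLinearMap (Matrix.toEuclideanLin X)‖

/-- Block `(l,j)` of a block-partitioned matrix. -/
def blk {N : ℕ} {n m : Fin N → ℕ}
    (X : Matrix ((l : Fin N) × Fin (n l)) ((j : Fin N) × Fin (m j)) ℝ)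
    (l j : Fin N) : Matrix (Fin (n l)) (Fin (m j)) ℝ :=
  fun a b => X ⟨l, a⟩ ⟨j, b⟩

/-- Block row of agent `i`. -/
def blkRow {N : ℕ} {n m : Fin N → ℕ}
    (K : Matrix ((l : Fin N) × Fin (m l)) ((j : Fin N) × Fin (n j)) ℝ)
    (i : Fin N) : Matrix (Fin (m i)) ((j : Fin N) × Fin (n j)) ℝ :=
  fun a b => K ⟨i, a⟩ b

/-- Zero-padded version of a diagonal block. -/
def pad {N : ℕ} {n : Fin N → ℕ} (i : Fin N) (M : Matrix (Fin (n i)) (Fin (n i)) ℝ) :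
    Matrix ((l : Fin N) × Fin (n l)) ((j : Fin N) × Fin (n j)) ℝ :=
  fun a b => if ha : a.1 = i then (if hb : b.1 = i then M (ha ▸ a.2) (hb ▸ b.2) else 0) else 0

/-- κ-truncation relative to agent `i`. -/
noncomputable def trunc {N : ℕ} {n m : Fin N → ℕ} (dist : Fin N → Fin N → ℝ) (i : Fin N) (κ : ℝ)
    (X : Matrix ((l : Fin N) × Fin (n l)) ((j : Fin N) × Fin (m j)) ℝ) :
    Matrix ((l : Fin N) × Fin (n l)) ((j : Fin N) × Fin (m j)) ℝ :=
  fun a b => if max (dist i a.1) (dist i b.1) < κ then X a b else 0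

/-- `X` is `(c,γ)`-spatially exponentially decaying. -/
def IsSED {N : ℕ} {n m : Fin N → ℕ} (dist : Fin N → Fin N → ℝ) (c γ : ℝ)
    (X : Matrix ((l : Fin N) × Fin (n l)) ((j : Fin N) × Fin (m j)) ℝ) : Prop :=
  ∀ l j : Fin N, opNorm (blk X l j) ≤ c * Real.exp (-γ * dist l j)

/-- `X` is `(c,γ)`-SED away from agent `i`. -/
def IsSEDAway {N : ℕ} {n m : Fin N → ℕ} (dist : Fin N → Fin N → ℝ) (i : Fin N) (c γ : ℝ)
    (X : Matrix ((l : Fin N) × Fin (n l)) ((j : Fin N) × Fin (m j)) ℝ) : Prop :=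
  ∀ l j : Fin N, opNorm (blk X l j) ≤ c * Real.exp (-γ * max (dist i l) (dist i j))

/-- `X` is `(τ,ρ)`-stable. -/
def IsStable {α : Type*} [Fintype α] [DecidableEq α] (τ ρ : ℝ) (X : Matrix α α ℝ) : Prop :=
  ∀ k : ℕ, opNorm (X ^ k) ≤ τ * Real.exp (-ρ * (k : ℝ))


lemma opNorm_nonneg' {α β : Type*} [Fintype α] [Fintype β] [DecidableEq β]
    (X : Matrix α β ℝ) : 0 ≤ opNorm X := norm_nonneg _

lemma opNorm_mul_le' {α β γ : Type*} [Fintype α] [Fintype β] [Fintype γ]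
    [DecidableEq β] [DecidableEq γ]
    (A : Matrix α β ℝ) (B : Matrix β γ ℝ) :
    opNorm (A * B) ≤ opNorm A * opNorm B := by
  have h : Matrix.toEuclideanLin (A * B) =
      (Matrix.toEuclideanLin A).comp (Matrix.toEuclideanLin B) := by
    rw [Matrix.toEuclideanLin_eq_toLin, Matrix.toEuclideanLin_eq_toLin,
      Matrix.toEuclideanLin_eq_toLin]
    exact Matrix.toLin_mul _ _ _ A B
  have h2 : LinearMap.toContinuousLinearMap (Matrix.toEuclideanLin (A * B)) =
      (LinearMap.toContinuousLinearMap (Matrix.toEuclideanLin A)).comp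
        (LinearMap.toContinuousLinearMap (Matrix.toEuclideanLin B)) := by
    apply ContinuousLinearMap.coe_injective
    simp only [h, LinearMap.coe_toContinuousLinearMap, ContinuousLinearMap.coe_comp]
    rfl
  rw [opNorm, h2]
  exact ContinuousLinearMap.opNorm_comp_le _ _

lemma opNorm_sum_le' {α β ι : Type*} [Fintype α] [Fintype β] [DecidableEq β]
    (s : Finset ι) (f : ι → Matrix α β ℝ) :
    opNorm (∑ i ∈ s, f i) ≤ ∑ i ∈ s, opNorm (f i) := by
  unfold opNorm
  rw [map_sum, map_sum]
  exact norm_sum_le _ _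

lemma blk_mul' {N : ℕ} {n : Fin N → ℕ}
    (A B : Matrix ((l : Fin N) × Fin (n l)) ((j : Fin N) × Fin (n j)) ℝ)
    (l j : Fin N) :
    blk (A * B) l j = ∑ m : Fin N, blk A l m * blk B m j := by
  ext a b
  simp only [blk, Matrix.mul_apply, Finset.sum_apply]
  rw [← Finset.univ_sigma_univ, Finset.sum_sigma]
  simp [Matrix.sum_apply, Matrix.mul_apply, blk]

/-- powers of a `(c_L,γ)`-SED square block matrix: for `k ≥ 1`,
`Lᵏ` is `(N^{k−1} c_Lᵏ, γ)`-SED. -/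
theorem SED_pow
    {N : ℕ} (n : Fin N → ℕ) (dist : Fin N → Fin N → ℝ)
    (hdist_nonneg : ∀ l j, 0 ≤ dist l j)
    (hdist_symm : ∀ l j, dist l j = dist j l)
    (hdist_tri : ∀ l j k, dist l j ≤ dist l k + dist k j)
    (cL γ : ℝ) (hγ : 0 ≤ γ)
    (L : Matrix ((l : Fin N) × Fin (n l)) ((j : Fin N) × Fin (n j)) ℝ)
    (hL : IsSED dist cL γ L) (k : ℕ) (hk : 1 ≤ k) :
    IsSED dist ((N : ℝ) ^ (k - 1) * cL ^ k) γ (L ^ k) := by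
  induction k, hk using Nat.le_induction with
  | base =>
    simpa using hL
  | succ k hk ih =>
    intro l j
    have hcL : 0 ≤ cL := by
      have h0 := (opNorm_nonneg' (blk L l l)).trans (hL l l)
      exact (mul_nonneg_iff_of_pos_right (Real.exp_pos _)).mp h0
    have hconst : (0:ℝ) ≤ (N : ℝ) ^ (k - 1) * cL ^ k :=
      mul_nonneg (pow_nonneg (Nat.cast_nonneg N) _) (pow_nonneg hcL _)
    rw [pow_succ, blk_mul']
    calc opNorm (∑ m : Fin N, blk (L ^ k) l m * blk L m j)
        ≤ ∑ m : Fin N, opNorm (blk (L ^ k) l m * blk L m j) :=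
          opNorm_sum_le' _ _
      _ ≤ ∑ m : Fin N, (N : ℝ) ^ (k - 1) * cL ^ k * cL ^ (k + 1 - k)
            * Real.exp (-γ * dist l j) := by
          apply Finset.sum_le_sum
          intro m _
          have h1 := opNorm_mul_le' (blk (L ^ k) l m) (blk L m j)
          have h2 : opNorm (blk (L ^ k) l m) * opNorm (blk L m j)
              ≤ ((N : ℝ) ^ (k - 1) * cL ^ k * Real.exp (-γ * dist l m))
                * (cL * Real.exp (-γ * dist m j)) :=
            mul_le_mul (ih l m) (hL m j) (opNorm_nonneg' _)
              (mul_nonneg hconst (Real.exp_pos _).le)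
          have h3 : Real.exp (-γ * dist l m) * Real.exp (-γ * dist m j)
              ≤ Real.exp (-γ * dist l j) := by
            rw [← Real.exp_add]
            apply Real.exp_le_exp.mpr
            have := hdist_tri l j m
            nlinarith
          have h4 : ((N : ℝ) ^ (k - 1) * cL ^ k * Real.exp (-γ * dist l m))
                * (cL * Real.exp (-γ * dist m j))
              ≤ (N : ℝ) ^ (k - 1) * cL ^ k * cL ^ (k + 1 - k)
                * Real.exp (-γ * dist l j) := by
            have : k + 1 - k = 1 := by omega
            rw [this, pow_one]
            calc ((N : ℝ) ^ (k - 1) * cL ^ k * Real.exp (-γ * dist l m))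
                  * (cL * Real.exp (-γ * dist m j))
                = ((N : ℝ) ^ (k - 1) * cL ^ k * cL)
                  * (Real.exp (-γ * dist l m) * Real.exp (-γ * dist m j)) := by ring
              _ ≤ ((N : ℝ) ^ (k - 1) * cL ^ k * cL) * Real.exp (-γ * dist l j) :=
                  mul_le_mul_of_nonneg_left h3 (mul_nonneg hconst hcL)
          linarith
      _ = (N : ℝ) ^ (k + 1 - 1) * cL ^ (k + 1) * Real.exp (-γ * dist l j) := by
          rw [Finset.sum_const, Finset.card_univ, Fintype.card_fin, nsmul_eq_mul]
          have hk1 : k - 1 + 1 = k := by omega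
          have : (N : ℝ) ^ (k + 1 - 1) = (N : ℝ) * (N : ℝ) ^ (k - 1) := by
            have e : k + 1 - 1 = k - 1 + 1 := by omega
            rw [e, pow_succ]; ring
          have hc : cL ^ (k + 1) = cL ^ k * cL ^ (k + 1 - k) := by
            rw [← pow_add]; congr 1; omega
          rw [this, hc]; ring
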